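/- Let p be a prime, O_L the ring of integers of a finite unramified extension L of ℚ_p (equivalently, a complete discrete valuation ring of characteristic 0 whose maximal ideal is generated by p and whose residue field k is finite), and let G* be a set of r×r matrices over O_L. The following three conditions are equivalent: (i) the rank over O_L of the submodule ∩_{D∈G*} ker(D) of O_L^r equals the dimension over k of the subspace ∩_{D∈G*} ker(D mod p) of k^r; (ii) whenever x ∈ O_L^r is such that for every D ∈ G* there exists y_D ∈ O_L^r with D·x = p·y_D, there exists x' ∈ O_L^r with D·x' = y_D for every D ∈ G*; (iii) there exist an integer 0 ≤ e ≤ r and Q ∈ GL_r(O_L) such that for every D ∈ G* the first e columns of Q⁻¹DQ vanish, i.e. Q⁻¹DQ = [[0, D̂],[0, D̃]] with D̂ ∈ M_{e,r−e}(O_L) and D̃ ∈ M_{r−e}(O_L), and there exist finitely many D_1,…,D_m ∈ G* and matrices Ĉ_i ∈ M_{r−e,e}(O_L), C̃_i ∈ M_{r−e}(O_L) (1 ≤ i ≤ m) with Σ_{i=1}^m (Ĉ_i D̂_i + C̃_i D̃_i) ∈ GL_{r−e}(O_L). -/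

import Mathlib

open Matrix

section helpers

variable {R : Type*} [CommRing R] {e r : ℕ}

/-- index of the `j`-th "tail" coordinate -/
def UF.tc (he : e ≤ r) : Fin (r - e) → Fin r := fun j => ⟨e + (j : ℕ), by omega⟩

/-- pad a tail vector with zeros in front -/
def UF.padT (he : e ≤ r) (t : Fin (r - e) → R) : Fin r → R :=
  fun j => if h : (j : ℕ) < e then 0 else t ⟨(j : ℕ) - e, by omega⟩

/-- tail of a vector -/
def UF.tl (he : e ≤ r) (c : Fin r → R) : Fin (r - e) → R := fun j => c (UF.tc he j)

lemma UF.tl_padT (he : e ≤ r) (t : Fin (r - e) → R) : UF.tl he (UF.padT he t) = t := by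
  funext j
  simp only [UF.tl, UF.padT, UF.tc]
  show (if h : e + (j : ℕ) < e then 0 else t ⟨e + (j : ℕ) - e, by omega⟩) = t j
  rw [dif_neg (by omega)]
  congr 1
  ext
  simp

lemma UF.fin_sum_split {M : Type*} [AddCommMonoid M] (he : e ≤ r) (F : Fin r → M) :
    ∑ j, F j = (∑ j : Fin e, F (Fin.castLE he j))
      + ∑ j : Fin (r - e), F (UF.tc he j) := by
  have h : e + (r - e) = r := by omega
  have := Fintype.sum_equiv (finCongr h) (fun x => F (finCongr h x)) F (fun x => rfl)
  rw [← this, Fin.sum_univ_add]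
  refine congrArg₂ (· + ·) ?_ ?_ <;>
    exact Finset.sum_congr rfl fun i _ => congrArg F (by ext; simp [UF.tc])

lemma UF.mulVec_tail (he : e ≤ r) (E : Matrix (Fin r) (Fin r) R)
    (hE : ∀ (i j : Fin r), (j : ℕ) < e → E i j = 0) (c : Fin r → R) :
    E *ᵥ c = (E.submatrix id (UF.tc he)) *ᵥ (UF.tl he c) := by
  funext i
  simp only [Matrix.mulVec, dotProduct, Matrix.submatrix_apply, id_eq]
  rw [UF.fin_sum_split he]
  rw [Finset.sum_eq_zero, zero_add]
  · rfl
  · intro j _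
    rw [hE _ _ (by simpa using j.isLt), zero_mul]

lemma UF.submatrix_row_mulVec {s : ℕ} (M : Matrix (Fin r) (Fin r) R) (f : Fin s → Fin r)
    (v : Fin r → R) (a : Fin s) : ((M.submatrix f id) *ᵥ v) a = (M *ᵥ v) (f a) := rfl

lemma UF.mulVec_eq_zero (E : Matrix (Fin r) (Fin r) R) (v : Fin r → R)
    (hE : ∀ (i j : Fin r), (j : ℕ) < e → E i j = 0) (hv : ∀ j : Fin r, e ≤ (j : ℕ) → v j = 0) :
    E *ᵥ v = 0 := by
  funext i
  simp only [Matrix.mulVec, dotProduct, Pi.zero_apply]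
  apply Finset.sum_eq_zero
  intro j _
  by_cases h : (j : ℕ) < e
  · rw [hE _ _ h, zero_mul]
  · rw [hv _ (by omega), mul_zero]

lemma UF.red_mulVec {S : Type*} [CommRing S] (f : R →+* S) {n m : ℕ}
    (M : Matrix (Fin n) (Fin m) R) (v : Fin m → R) :
    (M.map f) *ᵥ (fun i => f (v i)) = fun i => f ((M *ᵥ v) i) := by
  funext i
  simp [Matrix.mulVec, dotProduct, map_sum]

/-- pad a head vector with zeros behind, as a linear map -/
def UF.padHL (k : Type*) [Semiring k] (he : e ≤ r) : (Fin e → k) →ₗ[k] (Fin r → k) where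
  toFun t := fun j => if h : (j : ℕ) < e then t ⟨(j : ℕ), h⟩ else 0
  map_add' a b := by funext j; by_cases h : (j : ℕ) < e <;> simp [h]
  map_smul' c a := by funext j; by_cases h : (j : ℕ) < e <;> simp [h]

lemma UF.padHL_tc {k : Type*} [Semiring k] (he : e ≤ r) (t : Fin e → k) (j : Fin (r - e)) :
    UF.padHL k he t (UF.tc he j) = 0 := by
  simp only [UF.padHL, UF.tc, LinearMap.coe_mk, AddHom.coe_mk]
  rw [dif_neg (by omega)]

lemma UF.padT_tc (he : e ≤ r) (t : Fin (r - e) → R) (j : Fin (r - e)) :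
    UF.padT he t (UF.tc he j) = t j := by
  simp only [UF.padT, UF.tc]
  show (if h : e + (j : ℕ) < e then 0 else t ⟨e + (j : ℕ) - e, by omega⟩) = t j
  rw [dif_neg (by omega)]
  exact congrArg t (Fin.ext (by simp))

lemma UF.exists_finset_iInf {K V ι : Type*} [Field K] [AddCommGroup V] [Module K V]
    [FiniteDimensional K V] (W : ι → Submodule K V) :
    ∃ s : Finset ι, (⨅ i, W i) = ⨅ i ∈ s, W i := by
  classical
  set f : Finset ι → ℕ := fun s => Module.finrank K ↥(⨅ i ∈ s, W i) with hf
  have hne : (Set.range f).Nonempty := ⟨f ∅, ⟨∅, rfl⟩⟩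
  obtain ⟨s₀, hs₀⟩ := Nat.sInf_mem hne
  have hmin : ∀ s, f s₀ ≤ f s := fun s => hs₀ ▸ Nat.sInf_le ⟨s, rfl⟩
  refine ⟨s₀, le_antisymm (le_iInf₂ fun i _ => iInf_le W i) (le_iInf fun i => ?_)⟩
  have h1 : (⨅ j ∈ insert i s₀, W j) ≤ ⨅ j ∈ s₀, W j :=
    le_iInf₂ fun j hj => iInf₂_le j (Finset.mem_insert_of_mem hj)
  have h3 : (⨅ j ∈ insert i s₀, W j) = ⨅ j ∈ s₀, W j :=
    Submodule.eq_of_le_of_finrank_le h1 (hmin (insert i s₀))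
  rw [← h3]
  exact iInf₂_le i (Finset.mem_insert_self i s₀)

end helpers

section adapted

variable {O : Type} [CommRing O] [IsDomain O] [IsPrincipalIdealRing O]

lemma UF.mem_iInf_ker_iff' {R : Type*} [CommRing R] {r : ℕ} {ι : Type*} (G : Set ι)
    (F : ι → Matrix (Fin r) (Fin r) R) (x : Fin r → R) :
    x ∈ (⨅ D ∈ G, LinearMap.ker (Matrix.mulVecLin (F D))) ↔ ∀ D ∈ G, (F D) *ᵥ x = 0 := by
  simp [Submodule.mem_iInf, LinearMap.mem_ker, Matrix.mulVecLin_apply]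

lemma UF.mem_iInf_ker_iff {R : Type*} [CommRing R] {r : ℕ} (G : Set (Matrix (Fin r) (Fin r) R))
    (x : Fin r → R) :
    x ∈ (⨅ D ∈ G, LinearMap.ker (Matrix.mulVecLin D)) ↔ ∀ D ∈ G, D *ᵥ x = 0 := by
  simp [Submodule.mem_iInf, LinearMap.mem_ker, Matrix.mulVecLin_apply]

lemma UF.sum_mulVec {R : Type*} [CommRing R] {ι : Type*} (s : Finset ι) {a b : ℕ}
    (Mf : ι → Matrix (Fin a) (Fin b) R) (v : Fin b → R) :
    (∑ i ∈ s, Mf i) *ᵥ v = ∑ i ∈ s, (Mf i *ᵥ v) := by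
  funext j
  simp only [Matrix.mulVec, dotProduct, Matrix.sum_apply, Finset.sum_apply, Finset.sum_mul]
  rw [Finset.sum_comm]

lemma UF.adapted {r : ℕ} (G : Set (Matrix (Fin r) (Fin r) O)) :
    ∃ (e : ℕ) (_ : e ≤ r) (Q Q' : Matrix (Fin r) (Fin r) O),
      Q * Q' = 1 ∧ Q' * Q = 1 ∧
      Module.finrank O ↥(⨅ D ∈ G, LinearMap.ker (Matrix.mulVecLin D)) = e ∧
      (∀ x : Fin r → O, x ∈ (⨅ D ∈ G, LinearMap.ker (Matrix.mulVecLin D)) ↔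
        ∀ j : Fin r, e ≤ (j : ℕ) → (Q' *ᵥ x) j = 0) := by
  classical
  set M := ⨅ D ∈ G, LinearMap.ker (Matrix.mulVecLin D) with hM
  -- Smith normal form
  obtain ⟨n, snf⟩ := M.smithNormalForm (Pi.basisFun O (Fin r))
  obtain ⟨bM, bN, f, a, hsnf⟩ := snf
  have hfr : Module.finrank O ↥M = n := by
    rw [Module.finrank_eq_card_basis bN, Fintype.card_fin]
  -- saturation
  have hsat : ∀ (c : O) (v : Fin r → O), c ≠ 0 → c • v ∈ M → v ∈ M := by
    intro c v hc hcv
    rw [UF.mem_iInf_ker_iff] at hcv ⊢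
    intro D hD
    have h1 := hcv D hD
    rw [Matrix.mulVec_smul] at h1
    funext i
    have := congrFun h1 i
    simp only [Pi.smul_apply, smul_eq_mul, Pi.zero_apply] at this ⊢
    rcases mul_eq_zero.mp this with h | h
    · exact absurd h hc
    · exact h
  have ha : ∀ i, a i ≠ 0 := by
    intro i hai
    apply bN.ne_zero i
    have := hsnf i
    rw [hai, zero_smul] at this
    exact Subtype.ext this
  have hbMf : ∀ i, bM (f i) ∈ M := by
    intro i
    apply hsat (a i) _ (ha i)
    rw [← hsnf i]
    exact (bN i).2
  -- M is spanned by the bM (f i)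
  have hspan : M = Submodule.span O (Set.range (fun i => bM (f i))) := by
    apply le_antisymm
    · intro x hx
      have hmem : x ∈ Submodule.map M.subtype ⊤ := Submodule.mem_map.mpr ⟨⟨x, hx⟩, trivial, rfl⟩
      rw [← bN.span_eq, Submodule.map_span] at hmem
      have himg : ⇑M.subtype '' Set.range ⇑bN ⊆
          ↑(Submodule.span O (Set.range fun i => bM (f i))) := by
        rintro _ ⟨_, ⟨i, rfl⟩, rfl⟩
        have hi : M.subtype (bN i) = a i • bM (f i) := hsnf i
        rw [hi]
        exact Submodule.smul_mem _ _ (Submodule.subset_span ⟨i, rfl⟩)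
      exact (Submodule.span_le.mpr himg) hmem
    · rw [Submodule.span_le]
      rintro _ ⟨i, rfl⟩
      exact hbMf i
  -- n ≤ r
  have hnr : n ≤ r := by simpa using Fintype.card_le_of_embedding f
  -- a permutation of `Fin r` sending `j < n` to `f j`
  have hcardC : Fintype.card ↥((Set.range ⇑f)ᶜ) = r - n := by
    rw [Fintype.card_compl_set, Fintype.card_range]
    simp
  let g : Fin (r - n) ≃ ↥((Set.range ⇑f)ᶜ) := (Fintype.equivFinOfCardEq hcardC).symm
  let φ : Fin n ⊕ Fin (r - n) → Fin r := Sum.elim ⇑f (fun j => ((g j : ↥((Set.range ⇑f)ᶜ)) : Fin r))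
  have hφinj : Function.Injective φ := by
    rintro (i₁ | j₁) (i₂ | j₂) h
    · exact congrArg Sum.inl (f.injective h)
    · exact absurd ⟨i₁, h⟩ (g j₂).2
    · exact absurd ⟨i₂, h.symm⟩ (g j₁).2
    · exact congrArg Sum.inr (g.injective (Subtype.ext h))
  have hφbij : Function.Bijective φ := by
    rw [Fintype.bijective_iff_injective_and_card]
    exact ⟨hφinj, by simp; omega⟩
  have hadd : n + (r - n) = r := by omega
  let σ : Fin r ≃ Fin r :=
    ((finCongr hadd).symm.trans (finSumFinEquiv.symm.trans (Equiv.ofBijective φ hφbij)))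
  have hσ : ∀ (j : Fin r) (hj : (j : ℕ) < n), σ j = f ⟨(j : ℕ), hj⟩ := by
    intro j hj
    show (Equiv.ofBijective φ hφbij) (finSumFinEquiv.symm ((finCongr hadd).symm j)) = _
    have h1 : (finCongr hadd).symm j = Fin.castAdd (r - n) ⟨(j : ℕ), hj⟩ := by ext; simp
    rw [h1, finSumFinEquiv_symm_apply_castAdd]
    rfl
  -- the adapted basis
  let b : Module.Basis (Fin r) O (Fin r → O) := bM.reindex σ.symm
  have hb : ∀ (j : Fin r) (hj : (j : ℕ) < n), b j = bM (f ⟨(j : ℕ), hj⟩) := by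
    intro j hj
    rw [Module.Basis.reindex_apply, Equiv.symm_symm, hσ j hj]
  -- M = span of b over {j | j < n}
  have hspan2 : M = Submodule.span O (⇑b '' {j : Fin r | (j : ℕ) < n}) := by
    rw [hspan]
    congr 1
    ext x
    constructor
    · rintro ⟨i, rfl⟩
      refine ⟨⟨(i : ℕ), by omega⟩, by simpa using i.isLt, ?_⟩
      rw [hb _ (by simpa using i.isLt)]
    · rintro ⟨j, hj, rfl⟩
      exact ⟨⟨(j : ℕ), hj⟩, (hb j hj).symm⟩
  -- matrices
  let Q : Matrix (Fin r) (Fin r) O := (Pi.basisFun O (Fin r)).toMatrix ⇑b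
  let Q' : Matrix (Fin r) (Fin r) O := b.toMatrix ⇑(Pi.basisFun O (Fin r))
  have hQQ' : Q * Q' = 1 := Module.Basis.toMatrix_mul_toMatrix_flip _ _
  have hQ'Q : Q' * Q = 1 := Module.Basis.toMatrix_mul_toMatrix_flip _ _
  have hQ'x : ∀ x : Fin r → O, Q' *ᵥ x = ⇑(b.repr x) := by
    intro x
    have h1 := Module.Basis.toMatrix_mulVec_repr (Pi.basisFun O (Fin r)) b x
    have h0 : ⇑((Pi.basisFun O (Fin r)).repr x) = x := by funext i; simp
    rw [h0] at h1
    exact h1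
  refine ⟨n, hnr, Q, Q', hQQ', hQ'Q, hfr, ?_⟩
  intro x
  rw [hspan2, b.mem_span_image, Finsupp.support_subset_iff]
  constructor
  · intro h j hj
    rw [hQ'x]
    exact h j (by simp; omega)
  · intro h j hj
    have h2 := h j (by simp at hj; omega)
    rwa [hQ'x] at h2

end adapted

/-- equivalence of the three conditions of Theorem `ufix_ex`, part I. -/
theorem ufix_ex_part_I
    (p : ℕ) (hp : p.Prime)
    (O : Type) [CommRing O] [IsDomain O] [IsDiscreteValuationRing O] [CharZero O]
    (hmax : IsLocalRing.maximalIdeal O = Ideal.span {(p : O)})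
    (hfin : Finite (IsLocalRing.ResidueField O))
    (hcomplete : IsAdicComplete (IsLocalRing.maximalIdeal O) O)
    (r : ℕ) (G : Set (Matrix (Fin r) (Fin r) O)) :
    -- (i)
    List.TFAE [
      Module.finrank O
          ↥(⨅ D ∈ G, LinearMap.ker (Matrix.mulVecLin D)) =
        Module.finrank (IsLocalRing.ResidueField O)
          ↥(⨅ D ∈ G, LinearMap.ker
              (Matrix.mulVecLin (D.map (IsLocalRing.residue O)))),
      -- (ii)
      ∀ (x : Fin r → O) (y : Matrix (Fin r) (Fin r) O → (Fin r → O)),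
        (∀ D ∈ G, D.mulVec x = (p : O) • y D) →
        ∃ x' : Fin r → O, ∀ D ∈ G, D.mulVec x' = y D,
      -- (iii)
      ∃ (e : ℕ) (he : e ≤ r) (Q : Matrix (Fin r) (Fin r) O), IsUnit Q ∧
        (∀ D ∈ G, ∀ (i j : Fin r), (j : ℕ) < e → (Q⁻¹ * D * Q) i j = 0) ∧
        ∃ (m : ℕ) (Ds : Fin m → Matrix (Fin r) (Fin r) O) (_ : ∀ t : Fin m, Ds t ∈ G)
          (Chat : Fin m → Matrix (Fin (r - e)) (Fin e) O)
          (Ctil : Fin m → Matrix (Fin (r - e)) (Fin (r - e)) O),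
          IsUnit (∑ t : Fin m,
            (Chat t * ((Q⁻¹ * Ds t * Q).submatrix
                (fun i : Fin e => Fin.castLE he i)
                (fun j : Fin (r - e) => (⟨e + (j : ℕ), by omega⟩ : Fin r)))
            + Ctil t * ((Q⁻¹ * Ds t * Q).submatrix
                (fun i : Fin (r - e) => (⟨e + (i : ℕ), by omega⟩ : Fin r))
                (fun j : Fin (r - e) => (⟨e + (j : ℕ), by omega⟩ : Fin r))))) ] := by
  classical
  have hp0 : (p : O) ≠ 0 := Nat.cast_ne_zero.mpr hp.ne_zero
  tfae_have 3 → 2 := by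
    rintro ⟨e, he, Q, hQu, hcols, m, Ds, hDs, Chat, Ctil, hS0⟩
    intro x y hxy
    have hS : IsUnit (∑ t : Fin m,
        (Chat t * ((Q⁻¹ * Ds t * Q).submatrix (Fin.castLE he) (UF.tc he))
          + Ctil t * ((Q⁻¹ * Ds t * Q).submatrix (UF.tc he) (UF.tc he)))) := hS0
    set S := ∑ t : Fin m,
        (Chat t * ((Q⁻¹ * Ds t * Q).submatrix (Fin.castLE he) (UF.tc he))
          + Ctil t * ((Q⁻¹ * Ds t * Q).submatrix (UF.tc he) (UF.tc he))) with hSdef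
    have hdet : IsUnit Q.det := (Matrix.isUnit_iff_isUnit_det Q).mp hQu
    have hQQ' : Q * Q⁻¹ = 1 := Matrix.mul_nonsing_inv Q hdet
    have hQ'Q : Q⁻¹ * Q = 1 := Matrix.nonsing_inv_mul Q hdet
    set c := Q⁻¹ *ᵥ x with hc
    have hEc : ∀ D ∈ G, (Q⁻¹ * D * Q) *ᵥ c = (p : O) • (Q⁻¹ *ᵥ y D) := by
      intro D hD
      have h1 : (Q⁻¹ * D * Q) * Q⁻¹ = Q⁻¹ * D := by
        rw [Matrix.mul_assoc, hQQ', Matrix.mul_one]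
      rw [hc, Matrix.mulVec_mulVec, h1, ← Matrix.mulVec_mulVec, hxy D hD, Matrix.mulVec_smul]
    have hhat : ∀ i : Fin m, ((Q⁻¹ * Ds i * Q).submatrix (Fin.castLE he) (UF.tc he)) *ᵥ (UF.tl he c)
        = (p : O) • fun a => (Q⁻¹ *ᵥ y (Ds i)) (Fin.castLE he a) := by
      intro i
      funext a
      have h1 := UF.mulVec_tail he (Q⁻¹ * Ds i * Q)
        (fun i' j' hj' => hcols (Ds i) (hDs i) i' j' hj') c
      have h2 : (((Q⁻¹ * Ds i * Q).submatrix (Fin.castLE he) (UF.tc he)) *ᵥ (UF.tl he c)) a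
          = (((Q⁻¹ * Ds i * Q).submatrix id (UF.tc he)) *ᵥ (UF.tl he c)) (Fin.castLE he a) := rfl
      rw [h2, ← h1, hEc (Ds i) (hDs i)]
      simp
    have htil : ∀ i : Fin m, ((Q⁻¹ * Ds i * Q).submatrix (UF.tc he) (UF.tc he)) *ᵥ (UF.tl he c)
        = (p : O) • fun a => (Q⁻¹ *ᵥ y (Ds i)) (UF.tc he a) := by
      intro i
      funext a
      have h1 := UF.mulVec_tail he (Q⁻¹ * Ds i * Q)
        (fun i' j' hj' => hcols (Ds i) (hDs i) i' j' hj') c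
      have h2 : (((Q⁻¹ * Ds i * Q).submatrix (UF.tc he) (UF.tc he)) *ᵥ (UF.tl he c)) a
          = (((Q⁻¹ * Ds i * Q).submatrix id (UF.tc he)) *ᵥ (UF.tl he c)) (UF.tc he a) := rfl
      rw [h2, ← h1, hEc (Ds i) (hDs i)]
      simp
    set w := ∑ i : Fin m,
        (Chat i *ᵥ (fun a => (Q⁻¹ *ᵥ y (Ds i)) (Fin.castLE he a))
          + Ctil i *ᵥ (fun a => (Q⁻¹ *ᵥ y (Ds i)) (UF.tc he a))) with hw
    have hSc : S *ᵥ (UF.tl he c) = (p : O) • w := by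
      rw [hSdef, UF.sum_mulVec, hw, Finset.smul_sum]
      apply Finset.sum_congr rfl
      intro i _
      rw [Matrix.add_mulVec, ← Matrix.mulVec_mulVec, ← Matrix.mulVec_mulVec, hhat i, htil i,
        Matrix.mulVec_smul, Matrix.mulVec_smul, smul_add]
    have hSdet : IsUnit S.det := (Matrix.isUnit_iff_isUnit_det S).mp hS
    have hS'S : S⁻¹ * S = 1 := Matrix.nonsing_inv_mul S hSdet
    have htl : UF.tl he c = (p : O) • (S⁻¹ *ᵥ w) := by
      have h1 : UF.tl he c = (S⁻¹ * S) *ᵥ UF.tl he c := by rw [hS'S, Matrix.one_mulVec]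
      rw [h1, ← Matrix.mulVec_mulVec, hSc, Matrix.mulVec_smul]
    refine ⟨Q *ᵥ UF.padT he (S⁻¹ *ᵥ w), ?_⟩
    intro D hD
    have hcolsD : ∀ (i' j' : Fin r), (j' : ℕ) < e → (Q⁻¹ * D * Q) i' j' = 0 :=
      fun i' j' hj' => hcols D hD i' j' hj'
    have hDQ : D * Q = Q * (Q⁻¹ * D * Q) := by
      rw [← Matrix.mul_assoc, ← Matrix.mul_assoc, hQQ', Matrix.one_mul]
    have h3 : (p : O) • UF.padT he (S⁻¹ *ᵥ w) = UF.padT he (UF.tl he c) := by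
      funext j
      simp only [UF.padT, Pi.smul_apply, smul_eq_mul]
      by_cases hj : (j : ℕ) < e
      · rw [dif_pos hj, dif_pos hj, mul_zero]
      · rw [dif_neg hj, dif_neg hj, htl]
        simp
    have h2 : (p : O) • ((Q⁻¹ * D * Q) *ᵥ UF.padT he (S⁻¹ *ᵥ w)) = (Q⁻¹ * D * Q) *ᵥ c := by
      rw [← Matrix.mulVec_smul, h3, UF.mulVec_tail he _ hcolsD (UF.padT he (UF.tl he c)),
        UF.tl_padT, ← UF.mulVec_tail he _ hcolsD c]
    have hkey : (p : O) • (D *ᵥ (Q *ᵥ UF.padT he (S⁻¹ *ᵥ w))) = (p : O) • y D := by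
      rw [Matrix.mulVec_mulVec, hDQ, ← Matrix.mulVec_mulVec, ← Matrix.mulVec_smul, h2,
        hEc D hD, Matrix.mulVec_smul, Matrix.mulVec_mulVec, hQQ', Matrix.one_mulVec]
    funext i
    have h4 := congrFun hkey i
    simp only [Pi.smul_apply, smul_eq_mul] at h4
    exact mul_left_cancel₀ hp0 h4
  tfae_have 2 → 1 := by
    intro h2
    set k := IsLocalRing.ResidueField O with hk
    set ρ := IsLocalRing.residue O with hρdef
    have hρsurj : Function.Surjective ρ := IsLocalRing.residue_surjective
    have hρp : ρ (p : O) = 0 := by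
      by_contra h
      have hu := (IsLocalRing.residue_ne_zero_iff_isUnit _).mp h
      have hmem : (p : O) ∈ IsLocalRing.maximalIdeal O := by
        rw [hmax]; exact Ideal.mem_span_singleton_self _
      exact IsLocalRing.notMem_maximalIdeal.mpr hu hmem
    have hdvd : ∀ a : O, ρ a = 0 → (p : O) ∣ a := by
      intro a ha
      have h1 : ¬ IsUnit a := fun hu =>
        ((IsLocalRing.residue_ne_zero_iff_isUnit a).mpr hu) ha
      have hmem : a ∈ IsLocalRing.maximalIdeal O :=
        (IsLocalRing.mem_maximalIdeal a).mpr (mem_nonunits_iff.mpr h1)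
      rw [hmax] at hmem
      exact Ideal.mem_span_singleton.mp hmem
    obtain ⟨e, he, Q, Q', hQQ', hQ'Q, hfr, hchar⟩ := UF.adapted G
    -- the first e columns of Q' * D * Q vanish
    have hcols : ∀ D ∈ G, ∀ (i j : Fin r), (j : ℕ) < e → (Q' * D * Q) i j = 0 := by
      intro D hD i j hj
      have hQ'vj : Q' *ᵥ (Q *ᵥ Pi.single j 1) = Pi.single j 1 := by
        rw [Matrix.mulVec_mulVec, hQ'Q, Matrix.one_mulVec]
      have hvj : (Q *ᵥ Pi.single j 1) ∈ (⨅ D ∈ G, LinearMap.ker (Matrix.mulVecLin D)) := by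
        rw [hchar]
        intro l hl
        rw [hQ'vj]
        exact Pi.single_eq_of_ne (by rintro rfl; omega) 1
      have hDvj : D *ᵥ (Q *ᵥ Pi.single j 1) = 0 := (UF.mem_iInf_ker_iff G _).mp hvj D hD
      have h5 : (Q' * D * Q) *ᵥ Pi.single j 1 = 0 := by
        have h3 : (Q' * D * Q) *ᵥ Pi.single j 1 = Q' *ᵥ (D *ᵥ (Q *ᵥ Pi.single j 1)) := by
          rw [Matrix.mulVec_mulVec, Matrix.mulVec_mulVec, Matrix.mul_assoc]
        rw [h3, hDvj, Matrix.mulVec_zero]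
      have h6 := congrFun h5 i
      rw [Matrix.mulVec_single_one] at h6
      simpa using h6
    -- reduced matrices
    set Qb := Q.map ρ with hQb
    set Qb' := Q'.map ρ with hQb'
    have hQbQb' : Qb * Qb' = 1 := by
      rw [hQb, hQb', ← Matrix.map_mul, hQQ', Matrix.map_one ρ (map_zero ρ) (map_one ρ)]
    have hQb'Qb : Qb' * Qb = 1 := by
      rw [hQb, hQb', ← Matrix.map_mul, hQ'Q, Matrix.map_one ρ (map_zero ρ) (map_one ρ)]
    set L : (Fin e → k) →ₗ[k] (Fin r → k) := (Matrix.mulVecLin Qb).comp (UF.padHL k he) with hL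
    have hLapp : ∀ t, L t = Qb *ᵥ (UF.padHL k he t) := fun t => rfl
    have hLinj : Function.Injective L := by
      intro t₁ t₂ ht
      rw [hLapp, hLapp] at ht
      have h1 : UF.padHL k he t₁ = UF.padHL k he t₂ := by
        have h0 := congrArg (fun v => Qb' *ᵥ v) ht
        simpa only [Matrix.mulVec_mulVec, hQb'Qb, Matrix.one_mulVec] using h0
      funext a
      have h2 := congrFun h1 (Fin.castLE he a)
      have ha : ((Fin.castLE he a : Fin r) : ℕ) < e := by simpa using a.isLt
      simpa [UF.padHL, dif_pos ha] using h2
    set Nbar := ⨅ D ∈ G, LinearMap.ker (Matrix.mulVecLin (Matrix.map D ρ)) with hNbar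
    have hVN : LinearMap.range L ≤ Nbar := by
      rintro _ ⟨t, rfl⟩
      rw [hNbar, UF.mem_iInf_ker_iff']
      intro D hD
      have hDb : D.map ρ * Qb = Qb * ((Q' * D * Q).map ρ) := by
        rw [hQb, ← Matrix.map_mul, ← Matrix.map_mul]
        congr 1
        rw [← Matrix.mul_assoc, ← Matrix.mul_assoc, hQQ', Matrix.one_mul]
      have hE0 : ∀ (i j : Fin r), (j : ℕ) < e → ((Q' * D * Q).map ρ) i j = 0 := fun i j hj => by
        rw [Matrix.map_apply, hcols D hD i j hj, map_zero]
      have hpad0 : ∀ j : Fin r, e ≤ (j : ℕ) → (UF.padHL k he t) j = 0 := by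
        intro j hj
        simp [UF.padHL, dif_neg (by omega : ¬ ((j : ℕ) < e))]
      rw [hLapp, Matrix.mulVec_mulVec, hDb, ← Matrix.mulVec_mulVec,
        UF.mulVec_eq_zero _ _ hE0 hpad0, Matrix.mulVec_zero]
    have hNL : Nbar ≤ LinearMap.range L := by
      intro xb hxb
      set x : Fin r → O := fun i => (hρsurj (xb i)).choose with hxdef
      have hxspec : ∀ i, ρ (x i) = xb i := fun i => (hρsurj (xb i)).choose_spec
      have hdvd2 : ∀ D ∈ G, ∀ i, (p : O) ∣ (D *ᵥ x) i := by
        intro D hD i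
        apply hdvd
        have h3 : (D.map ρ) *ᵥ xb = 0 := by
          rw [hNbar, UF.mem_iInf_ker_iff'] at hxb
          exact hxb D hD
        have h4 := UF.red_mulVec ρ D x
        have h5 : (fun i => ρ (x i)) = xb := funext hxspec
        rw [h5, h3] at h4
        exact (congrFun h4.symm i)
      set y : Matrix (Fin r) (Fin r) O → (Fin r → O) :=
        fun D i => if h : (p : O) ∣ (D *ᵥ x) i then h.choose else 0 with hydef
      have hy : ∀ D ∈ G, D *ᵥ x = (p : O) • y D := by
        intro D hD
        funext i
        have hd := hdvd2 D hD i
        simp only [hydef, dif_pos hd, Pi.smul_apply, smul_eq_mul]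
        exact hd.choose_spec
      obtain ⟨x', hx'⟩ := h2 x y hy
      set z : Fin r → O := x - (p : O) • x' with hzdef
      have hz : z ∈ (⨅ D ∈ G, LinearMap.ker (Matrix.mulVecLin D)) := by
        rw [UF.mem_iInf_ker_iff]
        intro D hD
        rw [hzdef, Matrix.mulVec_sub, Matrix.mulVec_smul, hx' D hD, hy D hD, sub_self]
      have htail := (hchar _).mp hz
      have hredz : (fun i => ρ (z i)) = xb := by
        funext i
        simp only [hzdef, Pi.sub_apply, Pi.smul_apply, smul_eq_mul, map_sub, _root_.map_mul, hρp,
          zero_mul, sub_zero, hxspec]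
      have hQb'xb : Qb' *ᵥ xb = fun i => ρ ((Q' *ᵥ z) i) := by
        rw [← hredz, hQb']
        exact UF.red_mulVec ρ Q' z
      have htail2 : ∀ j : Fin r, e ≤ (j : ℕ) → (Qb' *ᵥ xb) j = 0 := by
        intro j hj
        rw [hQb'xb]
        show ρ ((Q' *ᵥ z) j) = 0
        rw [htail j hj, map_zero]
      refine ⟨(fun a => (Qb' *ᵥ xb) (Fin.castLE he a)), ?_⟩
      rw [hLapp]
      have hcb : (UF.padHL k he fun a => (Qb' *ᵥ xb) (Fin.castLE he a)) = Qb' *ᵥ xb := by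
        funext j
        by_cases hj : (j : ℕ) < e
        · simp only [UF.padHL, LinearMap.coe_mk, AddHom.coe_mk, dif_pos hj]
          exact congrArg _ (by ext; simp)
        · simp only [UF.padHL, LinearMap.coe_mk, AddHom.coe_mk, dif_neg hj]
          exact (htail2 j (by omega)).symm
      rw [hcb, Matrix.mulVec_mulVec, hQbQb', Matrix.one_mulVec]
    have hNeq : Nbar = LinearMap.range L := le_antisymm hNL hVN
    rw [hfr, hNeq, LinearMap.finrank_range_of_inj hLinj]
    exact (Module.finrank_fin_fun k).symm
  tfae_have 1 → 3 := by
    intro h1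
    set k := IsLocalRing.ResidueField O with hk
    set ρ := IsLocalRing.residue O with hρdef
    have hρsurj : Function.Surjective ρ := IsLocalRing.residue_surjective
    obtain ⟨e, he, Q, Q', hQQ', hQ'Q, hfr, hchar⟩ := UF.adapted G
    have hQu : IsUnit Q := ⟨⟨Q, Q', hQQ', hQ'Q⟩, rfl⟩
    have hQinv : Q⁻¹ = Q' := Matrix.inv_eq_left_inv hQ'Q
    have hcols : ∀ D ∈ G, ∀ (i j : Fin r), (j : ℕ) < e → (Q' * D * Q) i j = 0 := by
      intro D hD i j hj
      have hQ'vj : Q' *ᵥ (Q *ᵥ Pi.single j 1) = Pi.single j 1 := by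
        rw [Matrix.mulVec_mulVec, hQ'Q, Matrix.one_mulVec]
      have hvj : (Q *ᵥ Pi.single j 1) ∈ (⨅ D ∈ G, LinearMap.ker (Matrix.mulVecLin D)) := by
        rw [hchar]
        intro l hl
        rw [hQ'vj]
        exact Pi.single_eq_of_ne (by rintro rfl; omega) 1
      have hDvj : D *ᵥ (Q *ᵥ Pi.single j 1) = 0 := (UF.mem_iInf_ker_iff G _).mp hvj D hD
      have h5 : (Q' * D * Q) *ᵥ Pi.single j 1 = 0 := by
        have h3 : (Q' * D * Q) *ᵥ Pi.single j 1 = Q' *ᵥ (D *ᵥ (Q *ᵥ Pi.single j 1)) := by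
          rw [Matrix.mulVec_mulVec, Matrix.mulVec_mulVec, Matrix.mul_assoc]
        rw [h3, hDvj, Matrix.mulVec_zero]
      have h6 := congrFun h5 i
      rw [Matrix.mulVec_single_one] at h6
      simpa using h6
    set Qb := Q.map ρ with hQb
    set Qb' := Q'.map ρ with hQb'
    have hQbQb' : Qb * Qb' = 1 := by
      rw [hQb, hQb', ← Matrix.map_mul, hQQ', Matrix.map_one ρ (map_zero ρ) (map_one ρ)]
    have hQb'Qb : Qb' * Qb = 1 := by
      rw [hQb, hQb', ← Matrix.map_mul, hQ'Q, Matrix.map_one ρ (map_zero ρ) (map_one ρ)]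
    have hDb : ∀ D : Matrix (Fin r) (Fin r) O, D.map ρ * Qb = Qb * ((Q' * D * Q).map ρ) := by
      intro D
      rw [hQb, ← Matrix.map_mul, ← Matrix.map_mul]
      congr 1
      rw [← Matrix.mul_assoc, ← Matrix.mul_assoc, hQQ', Matrix.one_mul]
    have hE0 : ∀ D ∈ G, ∀ (i j : Fin r), (j : ℕ) < e → ((Q' * D * Q).map ρ) i j = 0 := by
      intro D hD i j hj
      rw [Matrix.map_apply, hcols D hD i j hj, map_zero]
    set L : (Fin e → k) →ₗ[k] (Fin r → k) := (Matrix.mulVecLin Qb).comp (UF.padHL k he) with hL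
    have hLapp : ∀ t, L t = Qb *ᵥ (UF.padHL k he t) := fun t => rfl
    have hLinj : Function.Injective L := by
      intro t₁ t₂ ht
      rw [hLapp, hLapp] at ht
      have h1' : UF.padHL k he t₁ = UF.padHL k he t₂ := by
        have h0 := congrArg (fun v => Qb' *ᵥ v) ht
        simpa only [Matrix.mulVec_mulVec, hQb'Qb, Matrix.one_mulVec] using h0
      funext a
      have h2' := congrFun h1' (Fin.castLE he a)
      have ha : ((Fin.castLE he a : Fin r) : ℕ) < e := by simpa using a.isLt
      simpa [UF.padHL, dif_pos ha] using h2'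
    set Nbar := ⨅ D ∈ G, LinearMap.ker (Matrix.mulVecLin (Matrix.map D ρ)) with hNbar
    have hVN : LinearMap.range L ≤ Nbar := by
      rintro _ ⟨t, rfl⟩
      rw [hNbar, UF.mem_iInf_ker_iff']
      intro D hD
      have hpad0 : ∀ j : Fin r, e ≤ (j : ℕ) → (UF.padHL k he t) j = 0 := by
        intro j hj
        simp [UF.padHL, dif_neg (by omega : ¬ ((j : ℕ) < e))]
      rw [hLapp, Matrix.mulVec_mulVec, hDb D, ← Matrix.mulVec_mulVec,
        UF.mulVec_eq_zero _ _ (hE0 D hD) hpad0, Matrix.mulVec_zero]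
    have hdim : Module.finrank k ↥Nbar = e := by rw [← h1, hfr]
    have hNeq : LinearMap.range L = Nbar := by
      apply Submodule.eq_of_le_of_finrank_le hVN
      rw [hdim, LinearMap.finrank_range_of_inj hLinj, Module.finrank_fin_fun]
    have htriv : ∀ t : Fin (r - e) → k,
        (∀ D ∈ G, (((Q' * D * Q).map ρ).submatrix id (UF.tc he)) *ᵥ t = 0) → t = 0 := by
      intro t ht
      have hx : Qb *ᵥ UF.padT he t ∈ Nbar := by
        rw [hNbar, UF.mem_iInf_ker_iff']
        intro D hD
        rw [Matrix.mulVec_mulVec, hDb D, ← Matrix.mulVec_mulVec,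
          UF.mulVec_tail he _ (hE0 D hD) (UF.padT he t), UF.tl_padT, ht D hD,
          Matrix.mulVec_zero]
      rw [← hNeq] at hx
      obtain ⟨t', ht'⟩ := hx
      rw [hLapp] at ht'
      have h5 : UF.padHL k he t' = UF.padT he t := by
        have h0 := congrArg (fun v => Qb' *ᵥ v) ht'
        simpa only [Matrix.mulVec_mulVec, hQb'Qb, Matrix.one_mulVec] using h0
      funext j
      have h6 := congrFun h5 (UF.tc he j)
      rw [UF.padHL_tc, UF.padT_tc] at h6
      exact h6.symm
    -- pass to a finite subfamily
    set Kf : ↥G → Submodule k (Fin (r - e) → k) := fun D =>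
      LinearMap.ker (Matrix.mulVecLin
        (((Q' * (D : Matrix (Fin r) (Fin r) O) * Q).map ρ).submatrix id (UF.tc he))) with hKf
    have hKbot : (⨅ D : ↥G, Kf D) = ⊥ := by
      rw [Submodule.eq_bot_iff]
      intro t ht
      rw [Submodule.mem_iInf] at ht
      apply htriv
      intro D hD
      have := ht ⟨D, hD⟩
      rw [hKf] at this
      simpa only [LinearMap.mem_ker, Matrix.mulVecLin_apply] using this
    obtain ⟨s, hs⟩ := UF.exists_finset_iInf Kf
    set l := s.toList with hl
    set m := l.length with hm
    set Ds : Fin m → Matrix (Fin r) (Fin r) O := fun i => ((l.get i : ↥G) : Matrix (Fin r) (Fin r) O)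
      with hDsdef
    have hDs : ∀ i, Ds i ∈ G := fun i => (l.get i).2
    set A : Matrix (Fin m × Fin r) (Fin (r - e)) k :=
      fun q b => ((Q' * Ds q.1 * Q).map ρ) q.2 (UF.tc he b) with hA
    have hAker : LinearMap.ker (Matrix.mulVecLin A) = ⊥ := by
      rw [Matrix.ker_mulVecLin_eq_bot_iff]
      intro t ht
      have hmem : t ∈ ⨅ D ∈ s, Kf D := by
        rw [Submodule.mem_iInf]
        intro D
        rw [Submodule.mem_iInf]
        intro hDm
        have hDl : D ∈ l := by rw [hl]; exact Finset.mem_toList.mpr hDm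
        obtain ⟨idx, hidx⟩ := List.mem_iff_get.mp hDl
        rw [hKf]
        simp only [LinearMap.mem_ker, Matrix.mulVecLin_apply]
        funext a
        have h7 := congrFun ht (idx, a)
        calc ((((Q' * (D : Matrix (Fin r) (Fin r) O) * Q).map ρ).submatrix id (UF.tc he)) *ᵥ t) a
            = (A *ᵥ t) (idx, a) := by rw [← hidx]; rfl
          _ = 0 := h7
      rw [← hs, hKbot] at hmem
      simpa using hmem
    obtain ⟨gL, hgL⟩ := LinearMap.exists_leftInverse_of_injective (Matrix.mulVecLin A) hAker
    set B := LinearMap.toMatrix' gL with hB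
    have hBA : B * A = 1 := by
      have h8 : LinearMap.toMatrix' (gL.comp (Matrix.mulVecLin A))
          = LinearMap.toMatrix' (LinearMap.id : (Fin (r - e) → k) →ₗ[k] (Fin (r - e) → k)) := by
        rw [hgL]
      rw [LinearMap.toMatrix'_comp, LinearMap.toMatrix'_id] at h8
      rw [hB, ← h8]
      congr 1
      rw [show Matrix.mulVecLin A = Matrix.toLin' A from rfl, LinearMap.toMatrix'_toLin']
    set chat : Fin m → Matrix (Fin (r - e)) (Fin e) k :=
      fun i => fun a b => B a (i, Fin.castLE he b) with hchat
    set ctil : Fin m → Matrix (Fin (r - e)) (Fin (r - e)) k :=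
      fun i => fun a b => B a (i, UF.tc he b) with hctil
    have hsum : (∑ i : Fin m,
        (chat i * (((Q' * Ds i * Q).map ρ).submatrix (Fin.castLE he) (UF.tc he))
          + ctil i * (((Q' * Ds i * Q).map ρ).submatrix (UF.tc he) (UF.tc he)))) = 1 := by
      rw [← hBA]
      ext a b
      rw [Matrix.mul_apply, Fintype.sum_prod_type, Matrix.sum_apply]
      apply Finset.sum_congr rfl
      intro i _
      rw [UF.fin_sum_split he (fun j => B a (i, j) * A (i, j) b)]
      rfl
    set lift : k → O := Function.surjInv hρsurj with hliftdef
    have hlift : ∀ z, ρ (lift z) = z := Function.surjInv_eq hρsurj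
    refine ⟨e, he, Q, hQu, ?_, m, Ds, hDs, fun i => (chat i).map lift,
      fun i => (ctil i).map lift, ?_⟩
    · intro D hD i j hj
      rw [hQinv]
      exact hcols D hD i j hj
    · have hgoal : IsUnit (∑ t : Fin m,
          ((chat t).map lift * ((Q⁻¹ * Ds t * Q).submatrix (Fin.castLE he) (UF.tc he))
            + (ctil t).map lift * ((Q⁻¹ * Ds t * Q).submatrix (UF.tc he) (UF.tc he)))) := by
        set S := ∑ t : Fin m,
          ((chat t).map lift * ((Q⁻¹ * Ds t * Q).submatrix (Fin.castLE he) (UF.tc he))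
            + (ctil t).map lift * ((Q⁻¹ * Ds t * Q).submatrix (UF.tc he) (UF.tc he))) with hS
        have hmapS : S.map ρ = 1 := by
          rw [← hsum, hS]
          ext a b
          simp only [Matrix.map_apply, Matrix.sum_apply, map_sum, Matrix.add_apply, map_add,
            Matrix.mul_apply, _root_.map_mul, Finset.mul_sum, map_sum, hQinv,
            Matrix.submatrix_apply, hlift]
          exact Finset.sum_congr rfl fun i _ => congrArg₂ (· + ·)
            (Finset.sum_congr rfl fun j _ => Eq.symm (Finset.mul_sum ..))
            (Finset.sum_congr rfl fun j _ => Eq.symm (Finset.mul_sum ..))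
        have hdetS : IsUnit S.det := by
          have h9 : ρ S.det = 1 := by
            rw [RingHom.map_det, RingHom.mapMatrix_apply, hmapS, Matrix.det_one]
          have h10 : ρ S.det ≠ 0 := by rw [h9]; exact one_ne_zero
          exact (IsLocalRing.residue_ne_zero_iff_isUnit _).mp h10
        exact (Matrix.isUnit_iff_isUnit_det S).mpr hdetS
      exact hgoal
  tfae_finish
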